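/- Let f : ℝⁿ → ℝ be Lipschitz continuous and bounded below, let {d̄_k} be dense in the unit sphere of ℝⁿ, and consider the direct search iteration: x_{k+1} = x_k + α_k d̄_k and α_{k+1} = γ₂α_k if f(x_k + α_k d̄_k) ≤ f(x_k) − γα_k², otherwise x_{k+1} = x_k and α_{k+1} = γ₁α_k, with γ > 0, γ₁ ∈ (0,1), γ₂ ≥ 1, α_0 > 0. If a subsequence {x_{i(k)}} of unsuccessful iterates converges to x* and for every unit vector d there is a further subsequence with d̄_{j(i(k))} → d, then x* is Clarke stationary: f°(x*, d) ≥ 0 for every unit vector d. -/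

import Mathlib

open Filter

/-- The Clarke generalized directional derivative. -/
noncomputable def clarkeDeriv {n : ℕ} (f : EuclideanSpace ℝ (Fin n) → ℝ)
    (x v : EuclideanSpace ℝ (Fin n)) : ℝ :=
  limsup (fun p : EuclideanSpace ℝ (Fin n) × ℝ => (f (p.1 + p.2 • v) - f p.1) / p.2)
    ((nhds x) ×ˢ (nhdsWithin 0 (Set.Ioi 0)))

theorem stmt_8 {n : ℕ} (f : EuclideanSpace ℝ (Fin n) → ℝ) (K : NNReal) (f_low : ℝ)
    (hLip : LipschitzWith K f) (hlow : ∀ y, f_low ≤ f y)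
    (dbar : ℕ → EuclideanSpace ℝ (Fin n)) (hsph : ∀ k, ‖dbar k‖ = 1)
    (hdense : Metric.sphere (0 : EuclideanSpace ℝ (Fin n)) 1 ⊆ closure (Set.range dbar))
    (x : ℕ → EuclideanSpace ℝ (Fin n)) (α : ℕ → ℝ)
    (γ γ₁ γ₂ : ℝ) (hγ : 0 < γ) (hγ₁ : γ₁ ∈ Set.Ioo (0 : ℝ) 1) (hγ₂ : 1 ≤ γ₂)
    (hα0 : 0 < α 0)
    (hstep : ∀ k,
      (f (x k + α k • dbar k) ≤ f (x k) - γ * (α k) ^ 2 ∧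
        x (k + 1) = x k + α k • dbar k ∧ α (k + 1) = γ₂ * α k) ∨
      (f (x k + α k • dbar k) > f (x k) - γ * (α k) ^ 2 ∧
        x (k + 1) = x k ∧ α (k + 1) = γ₁ * α k))
    (i : ℕ → ℕ) (hi : StrictMono i)
    (hunsucc : ∀ k, f (x (i k) + α (i k) • dbar (i k)) > f (x (i k)) - γ * (α (i k)) ^ 2)
    (xstar : EuclideanSpace ℝ (Fin n))
    (hconv : Tendsto (fun k => x (i k)) atTop (nhds xstar))
    (hrefine : ∀ d : EuclideanSpace ℝ (Fin n), ‖d‖ = 1 →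
      ∃ j : ℕ → ℕ, StrictMono j ∧
        Tendsto (fun k => dbar (i (j k))) atTop (nhds d)) :
    ∀ d : EuclideanSpace ℝ (Fin n), ‖d‖ = 1 → clarkeDeriv f xstar d ≥ 0 := by
  obtain ⟨hγ₁0, hγ₁1⟩ := hγ₁
  have hγ₂0 : (0:ℝ) < γ₂ := lt_of_lt_of_le one_pos hγ₂
  -- positivity of step sizes
  have hαpos : ∀ k, 0 < α k := by
    intro k
    induction k with
    | zero => exact hα0
    | succ k ih =>
      rcases hstep k with ⟨_, _, h⟩ | ⟨_, _, h⟩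
      · rw [h]; positivity
      · rw [h]; positivity
  -- Lyapunov function Φ k = f (x k) + c * (α k)^2 with c = γ/(2 γ₂²)
  set c : ℝ := γ / (2 * γ₂ ^ 2) with hc
  have hcpos : 0 < c := by positivity
  have hcγ₂ : c * γ₂ ^ 2 = γ / 2 := by
    rw [hc, div_mul_eq_mul_div, div_eq_div_iff (by positivity) (by norm_num)]; ring
  set δ : ℝ := min (γ / 2) (c * (1 - γ₁ ^ 2)) with hδ
  have hδpos : 0 < δ := by
    apply lt_min (by positivity)
    have : 0 < 1 - γ₁ ^ 2 := by nlinarith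
    positivity
  set Φ : ℕ → ℝ := fun k => f (x k) + c * (α k) ^ 2 with hΦ
  have hdesc : ∀ k, Φ (k + 1) + δ * (α k) ^ 2 ≤ Φ k := by
    intro k
    rcases hstep k with ⟨hf, hx, hα⟩ | ⟨hf, hx, hα⟩
    · have h1 : δ ≤ γ / 2 := min_le_left _ _
      have h2 : (0:ℝ) ≤ (α k) ^ 2 := sq_nonneg _
      simp only [hΦ, hx, hα]
      have : c * (γ₂ * α k) ^ 2 = (γ / 2) * (α k) ^ 2 := by
        rw [mul_pow]; rw [show c * (γ₂ ^ 2 * α k ^ 2) = (c * γ₂ ^ 2) * α k ^ 2 by ring, hcγ₂]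
      rw [this]
      nlinarith [mul_le_mul_of_nonneg_right h1 h2]
    · have h1 : δ ≤ c * (1 - γ₁ ^ 2) := min_le_right _ _
      have h2 : (0:ℝ) ≤ (α k) ^ 2 := sq_nonneg _
      simp only [hΦ, hx, hα]
      nlinarith [mul_le_mul_of_nonneg_right h1 h2]
  have hΦlow : ∀ k, f_low ≤ Φ k := by
    intro k
    have := hlow (x k)
    have : 0 ≤ c * (α k) ^ 2 := by positivity
    simp only [hΦ]; linarith [hlow (x k)]
  have hsum : ∀ N, ∑ k ∈ Finset.range N, δ * (α k) ^ 2 ≤ Φ 0 - f_low := by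
    intro N
    have key : ∀ N, ∑ k ∈ Finset.range N, δ * (α k) ^ 2 ≤ Φ 0 - Φ N := by
      intro N
      induction N with
      | zero => simp
      | succ N ih =>
        rw [Finset.sum_range_succ]
        have := hdesc N
        linarith
    have := key N
    have := hΦlow N
    linarith
  have hsummable : Summable (fun k => δ * (α k) ^ 2) :=
    summable_of_sum_range_le (fun k => by positivity) hsum
  have hα2 : Tendsto (fun k => (α k) ^ 2) atTop (nhds 0) := by
    have h := hsummable.tendsto_atTop_zero
    have := h.const_mul (1/δ)
    simp only [mul_zero] at this
    convert this using 2 with k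
    field_simp
  have hαto0 : Tendsto α atTop (nhds 0) := by
    have h : Tendsto (fun k => Real.sqrt ((α k) ^ 2)) atTop (nhds 0) := by
      have := (Real.continuous_sqrt.tendsto 0).comp hα2
      simpa [Function.comp_def] using this
    refine h.congr (fun k => Real.sqrt_sq (hαpos k).le)
  -- main argument
  intro d hd
  obtain ⟨j, hj, hdbar⟩ := hrefine d hd
  set m : ℕ → ℕ := fun k => i (j k) with hm
  set g : EuclideanSpace ℝ (Fin n) × ℝ → ℝ :=
    fun p => (f (p.1 + p.2 • d) - f p.1) / p.2 with hg
  set l : Filter (EuclideanSpace ℝ (Fin n) × ℝ) :=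
    (nhds xstar) ×ˢ (nhdsWithin 0 (Set.Ioi 0)) with hl
  set seq : ℕ → EuclideanSpace ℝ (Fin n) × ℝ := fun k => (x (m k), α (m k)) with hseq
  have hmj : Tendsto m atTop atTop := (hi.tendsto_atTop).comp (hj.tendsto_atTop)
  have hαm : Tendsto (fun k => α (m k)) atTop (nhds 0) := hαto0.comp hmj
  have hxm : Tendsto (fun k => x (m k)) atTop (nhds xstar) :=
    hconv.comp (hj.tendsto_atTop)
  have hseqto : Tendsto seq atTop l := by
    rw [hl]
    apply Tendsto.prodMk hxm
    rw [tendsto_nhdsWithin_iff]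
    exact ⟨hαm, Eventually.of_forall fun k => hαpos (m k)⟩
  -- g is bounded by K on l
  have hbound : ∀ᶠ p in l, |g p| ≤ (K:ℝ) := by
    have h2 : ∀ᶠ p in l, p.2 ∈ Set.Ioi (0:ℝ) :=
      tendsto_snd.eventually eventually_mem_nhdsWithin
    filter_upwards [h2] with p hp
    have hp' : (0:ℝ) < p.2 := hp
    have hle : |f (p.1 + p.2 • d) - f p.1| ≤ (K:ℝ) * p.2 := by
      have := hLip.dist_le_mul (p.1 + p.2 • d) p.1
      rw [Real.dist_eq] at this
      have hdist : dist (p.1 + p.2 • d) p.1 = p.2 := by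
        rw [dist_eq_norm]
        simp [norm_smul, abs_of_pos hp', hd]
      rw [hdist] at this
      exact this
    rw [hg, abs_div, abs_of_pos hp', div_le_iff₀ hp']
    exact hle
  -- lower bound along the subsequence
  have hlb : ∀ k, -γ * α (m k) - (K:ℝ) * ‖d - dbar (m k)‖ ≤ g (seq k) := by
    intro k
    have hαk := hαpos (m k)
    have h1 : f (x (m k)) - γ * (α (m k)) ^ 2 < f (x (m k) + α (m k) • dbar (m k)) :=
      hunsucc (j k)
    have h2 : |f (x (m k) + α (m k) • d) - f (x (m k) + α (m k) • dbar (m k))|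
        ≤ (K:ℝ) * (α (m k) * ‖d - dbar (m k)‖) := by
      have := hLip.dist_le_mul (x (m k) + α (m k) • d) (x (m k) + α (m k) • dbar (m k))
      rw [Real.dist_eq] at this
      have hdist : dist (x (m k) + α (m k) • d) (x (m k) + α (m k) • dbar (m k))
          = α (m k) * ‖d - dbar (m k)‖ := by
        rw [dist_eq_norm]
        have : (x (m k) + α (m k) • d) - (x (m k) + α (m k) • dbar (m k))
            = α (m k) • (d - dbar (m k)) := by
          rw [smul_sub]; abel
        rw [this, norm_smul, Real.norm_eq_abs, abs_of_pos hαk]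
      rw [hdist] at this
      exact this
    have h3 : f (x (m k)) - γ * (α (m k)) ^ 2 - (K:ℝ) * (α (m k) * ‖d - dbar (m k)‖)
        ≤ f (x (m k) + α (m k) • d) := by
      have := abs_le.mp h2
      linarith [this.1]
    rw [hg]
    rw [le_div_iff₀ hαk]
    nlinarith
  have hh : Tendsto (fun k => -γ * α (m k) - (K:ℝ) * ‖d - dbar (m k)‖) atTop (nhds 0) := by
    have h1 : Tendsto (fun k => -γ * α (m k)) atTop (nhds 0) := by
      have := hαm.const_mul (-γ); simpa using this
    have h2 : Tendsto (fun k => (K:ℝ) * ‖d - dbar (m k)‖) atTop (nhds 0) := by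
      have hn : Tendsto (fun k => ‖d - dbar (m k)‖) atTop (nhds 0) := by
        have : Tendsto (fun k => d - dbar (m k)) atTop (nhds (d - d)) :=
          tendsto_const_nhds.sub hdbar
        simp only [sub_self] at this
        simpa using this.norm
      have := hn.const_mul (K:ℝ); simpa using this
    have := h1.sub h2
    simpa using this
  -- boundedness facts
  have hgK : ∀ᶠ k in atTop, |g (seq k)| ≤ (K:ℝ) := hseqto.eventually hbound
  have hbd_above : IsBoundedUnder (· ≤ ·) atTop (fun k => g (seq k)) :=
    ⟨(K:ℝ), hgK.mono fun k h => (abs_le.mp h).2⟩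
  have hbd_below : IsBoundedUnder (· ≥ ·) atTop (fun k => g (seq k)) :=
    ⟨-(K:ℝ), hgK.mono fun k h => (abs_le.mp h).1⟩
  have hbd_l : IsBoundedUnder (· ≤ ·) l g :=
    ⟨(K:ℝ), hbound.mono fun p h => (abs_le.mp h).2⟩
  -- 0 ≤ limsup (g ∘ seq)
  have h0le : (0:ℝ) ≤ limsup (g ∘ seq) atTop := by
    have hco : IsCoboundedUnder (· ≤ ·) atTop
        (fun k => -γ * α (m k) - (K:ℝ) * ‖d - dbar (m k)‖) :=
      (hh.isBoundedUnder_ge).isCoboundedUnder_le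
    have hmono : limsup (fun k => -γ * α (m k) - (K:ℝ) * ‖d - dbar (m k)‖) atTop
        ≤ limsup (g ∘ seq) atTop :=
      limsup_le_limsup (Eventually.of_forall hlb) hco hbd_above
    rwa [hh.limsup_eq] at hmono
  -- limsup (g ∘ seq) ≤ limsup g l
  have hle : limsup (g ∘ seq) atTop ≤ limsup g l := by
    rw [limsup_comp g seq atTop]
    refine limsup_le_limsup_of_le hseqto ?_ hbd_l
    exact hbd_below.isCoboundedUnder_le
  exact le_trans h0le hle
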